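/- Let H_C, H_add, H_inf be finite-dimensional ℂ-vector spaces, 𝓗 = H_C ⊕ H_add ⊕ H_inf, and 𝓕 ⊆ 𝓗 a subspace satisfying the modulus conditions: 𝓗 = 𝓕 + H_C + H_add and H_add ∩ 𝓕 = 0. Define the dual data: 𝓗^∨ = H_C^* ⊕ H_inf^* ⊕ H_add^* and 𝓕^∨ := (𝓗/𝓕)^* viewed as the annihilator of 𝓕 inside 𝓗^* ≅ 𝓗^∨ (with the second and third summands swapped). Then the dual data again satisfies the modulus conditions: 𝓗^∨ = 𝓕^∨ + H_C^* + H_inf^* and H_inf^* ∩ 𝓕^∨ = 0. -/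

import Mathlib

/-- let `𝓕 ⊆ 𝓗 = HC ⊕ Hadd ⊕ Hinf` satisfy the modulus conditions
(c) `𝓗 = 𝓕 + HC + Hadd` and (d) `Hadd ∩ 𝓕 = 0`. Inside the dual `𝓗* `, let
`𝓕^∨` be the annihilator of `𝓕`, let `HC*` be the functionals vanishing on
`Hadd ⊕ Hinf`, and `Hinf*` those vanishing on `HC ⊕ Hadd` (in the dual object the
roles of 'add' and 'inf' are swapped: the new add-part is `Hinf*`). Then the dual
data satisfies the modulus conditions again:
`𝓗* = 𝓕^∨ + HC* + Hinf*` and `Hinf* ∩ 𝓕^∨ = 0`. -/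
theorem stmt_13
    (HC Hadd Hinf : Type) [AddCommGroup HC] [Module ℂ HC]
    [AddCommGroup Hadd] [Module ℂ Hadd] [AddCommGroup Hinf] [Module ℂ Hinf]
    [FiniteDimensional ℂ HC] [FiniteDimensional ℂ Hadd] [FiniteDimensional ℂ Hinf]
    (𝓕 : Submodule ℂ (HC × Hadd × Hinf))
    (hc : ∀ h : HC × Hadd × Hinf, ∃ f ∈ 𝓕, ∃ (x : HC) (v : Hadd), h = f + (x, v, 0))
    (hd : ∀ v : Hadd, ((0 : HC), v, (0 : Hinf)) ∈ 𝓕 → v = 0) :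
    (∀ φ : (HC × Hadd × Hinf) →ₗ[ℂ] ℂ,
        ∃ ψ χ ξ : (HC × Hadd × Hinf) →ₗ[ℂ] ℂ,
          (∀ z ∈ 𝓕, ψ z = 0) ∧
          (∀ (v : Hadd) (w : Hinf), χ (0, v, w) = 0) ∧
          (∀ (x : HC) (v : Hadd), ξ (x, v, 0) = 0) ∧
          φ = ψ + χ + ξ) ∧
    (∀ φ : (HC × Hadd × Hinf) →ₗ[ℂ] ℂ,
        (∀ z ∈ 𝓕, φ z = 0) → (∀ (x : HC) (v : Hadd), φ (x, v, 0) = 0) → φ = 0) := by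
  constructor
  · intro φ
    -- the embedding of Hadd
    let ι : Hadd →ₗ[ℂ] HC × Hadd × Hinf :=
      { toFun := fun v => (0, v, 0)
        map_add' := by intro a b; simp [Prod.ext_iff]
        map_smul' := by intro c a; simp [Prod.ext_iff] }
    let q := 𝓕.mkQ
    let j : Hadd →ₗ[ℂ] (HC × Hadd × Hinf) ⧸ 𝓕 := q.comp ι
    have hj : Function.Injective j := by
      rw [← LinearMap.ker_eq_bot]
      ext v
      simp only [LinearMap.mem_ker, Submodule.mem_bot]
      constructor
      · intro hv
        have : ι v ∈ 𝓕 := by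
          have := hv
          simpa [j, q, Submodule.Quotient.mk_eq_zero] using hv
        exact hd v this
      · intro hv; subst hv; simp
    let e := LinearEquiv.ofInjective j hj
    obtain ⟨C, hC⟩ := Submodule.exists_isCompl (LinearMap.range j)
    let π := Submodule.projectionOnto _ C hC
    let ψ : (HC × Hadd × Hinf) →ₗ[ℂ] ℂ :=
      (((φ.comp ι).comp e.symm.toLinearMap).comp π).comp q
    have hψF : ∀ z ∈ 𝓕, ψ z = 0 := by
      intro z hz
      have : q z = 0 := by simpa [q, Submodule.Quotient.mk_eq_zero] using hz
      simp [ψ, this]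
    have key : ∀ v : Hadd, ψ (ι v) = φ (ι v) := by
      intro v
      have hmem : j v ∈ LinearMap.range j := ⟨v, rfl⟩
      have hπ : π (q (ι v)) = ⟨j v, hmem⟩ := by
        have := Submodule.linearProjOfIsCompl_apply_left hC ⟨j v, hmem⟩
        simpa [π, j] using this
      have hes : e.symm ⟨j v, hmem⟩ = v := by
        apply hj
        have h1 : (e (e.symm ⟨j v, hmem⟩) : (HC × Hadd × Hinf) ⧸ 𝓕) = j v := by
          rw [e.apply_symm_apply]
        have h2 : ∀ w : Hadd, (e w : (HC × Hadd × Hinf) ⧸ 𝓕) = j w := by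
          intro w; simp [e]
        calc j (e.symm ⟨j v, hmem⟩) = ↑(e (e.symm ⟨j v, hmem⟩)) := (h2 _).symm
          _ = j v := h1
      simp only [ψ, LinearMap.comp_apply, hπ, LinearEquiv.coe_coe]
      rw [hes]
    -- projections onto first and third factors (as maps into the total space)
    let pC : (HC × Hadd × Hinf) →ₗ[ℂ] HC × Hadd × Hinf :=
      { toFun := fun x => (x.1, 0, 0)
        map_add' := by intro a b; simp [Prod.ext_iff]
        map_smul' := by intro c a; simp [Prod.ext_iff] }
    let pI : (HC × Hadd × Hinf) →ₗ[ℂ] HC × Hadd × Hinf :=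
      { toFun := fun x => (0, 0, x.2.2)
        map_add' := by intro a b; simp [Prod.ext_iff]
        map_smul' := by intro c a; simp [Prod.ext_iff] }
    refine ⟨ψ, (φ - ψ).comp pC, (φ - ψ).comp pI, hψF, ?_, ?_, ?_⟩
    · intro v w; simp [pC]
      rw [show ((0:HC), (0:Hadd), (0:Hinf)) = (0 : HC × Hadd × Hinf) from rfl, map_zero, map_zero, sub_zero]
    · intro x v; simp [pI]
      rw [show ((0:HC), (0:Hadd), (0:Hinf)) = (0 : HC × Hadd × Hinf) from rfl, map_zero, map_zero, sub_zero]
    · refine LinearMap.ext fun z => ?_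
      obtain ⟨x, v, w⟩ := z
      have hsplit : (x, v, w) = (x, (0:Hadd), (0:Hinf)) + ((0:HC), v, (0:Hinf))
          + ((0:HC), (0:Hadd), w) := by simp [Prod.ext_iff]
      have hφ : φ (x, v, w) = φ (x, 0, 0) + φ (0, v, 0) + φ (0, 0, w) := by
        rw [hsplit, map_add, map_add]
      have hψ : ψ (x, v, w) = ψ (x, 0, 0) + ψ (0, v, 0) + ψ (0, 0, w) := by
        rw [hsplit, map_add, map_add]
      have hk := key v
      simp only [ι, LinearMap.coe_mk, AddHom.coe_mk] at hk
      simp only [LinearMap.add_apply, LinearMap.comp_apply, LinearMap.sub_apply,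
        pC, pI, LinearMap.coe_mk, AddHom.coe_mk]
      rw [hφ, hψ, hk]
      ring
  · intro φ hF hK
    refine LinearMap.ext fun z => ?_
    obtain ⟨f, hf, x, v, hz⟩ := hc z
    rw [hz]
    rw [map_add, hF f hf, hK x v, LinearMap.zero_apply]
    ring
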